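/- Let m ≥ 1 be an integer, λ ∈ ℂ with λ ≠ 1, λ^n ≠ 1, λ^{n+1} ≠ 1, and set ϑ_k = λ^k − 1. Define h_λ(r) = γ_{m+1}(r) + γ_m(r) + ϑ_{2n+1}/(ϑ_{n+1} ϑ_n), where γ_k(r) are the Chebyshev-type polynomials in r with γ_0=0, γ_1=1, γ_{k+1}=rγ_k − γ_{k−1}. Then h_λ, as a polynomial in r of degree m, has no triple root. -/

import Mathlib

open Polynomial

lemma auxB (G : ℕ → Polynomial ℂ) (h0 : G 0 = 0) (h1 : G 1 = 1)
    (hrec : ∀ k : ℕ, G (k + 2) = X * G (k + 1) - G k) (j : ℕ) :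
    (4 - X ^ 2) * derivative (G (j + 1))
      = (2 * (j : Polynomial ℂ) + 2) * G j - (j : Polynomial ℂ) * X * G (j + 1) := by
  induction j using Nat.twoStepInduction with
  | zero => simp [h0, h1]
  | one =>
      have h2 : G 2 = X := by rw [hrec 0, h0, h1]; ring
      simp [h1, h2]; ring
  | more j ih1 ih2 =>
      have e : G (j + 3) = X * G (j + 2) - G (j + 1) := hrec (j + 1)
      have e2 : G (j + 2) = X * G (j + 1) - G j := hrec j
      rw [e, derivative_sub, derivative_mul, derivative_X]
      push_cast at ih1 ih2 ⊢
      linear_combination (X : Polynomial ℂ) * ih2 - ih1 - (2 * (j : Polynomial ℂ) + 2) * e2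


lemma X2ne : (2 + X : Polynomial ℂ) ≠ 0 := fun hco => by
  have := congrArg (eval 0) hco; simp at this
lemma X2ne' : (2 - X : Polynomial ℂ) ≠ 0 := fun hco => by
  have := congrArg (eval 0) hco; simp at this

lemma auxC (G : ℕ → Polynomial ℂ) (h0 : G 0 = 0) (h1 : G 1 = 1)
    (hrec : ∀ k : ℕ, G (k + 2) = X * G (k + 1) - G k) (t : ℕ) :
    (2 - X) * derivative (G (t + 2) + G (t + 1))
      = ((t : Polynomial ℂ) + 2) * G (t + 1) - ((t : Polynomial ℂ) + 1) * G (t + 2) := by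
  have b1 := auxB G h0 h1 hrec (t + 1)
  have b0 := auxB G h0 h1 hrec t
  have e : G (t + 2) = X * G (t + 1) - G t := hrec t
  refine mul_left_cancel₀ X2ne ?_
  simp only [derivative_add]
  push_cast at b1 b0 ⊢
  linear_combination b1 + b0 + (2 * (t : Polynomial ℂ) + 2) * e

lemma auxE (G : ℕ → Polynomial ℂ) (h0 : G 0 = 0) (h1 : G 1 = 1)
    (hrec : ∀ k : ℕ, G (k + 2) = X * G (k + 1) - G k) (t : ℕ) :
    (4 - X ^ 2) * derivative (derivative (G (t + 2) + G (t + 1)))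
      = 2 * (X + 1) * derivative (G (t + 2) + G (t + 1))
        - (((t : Polynomial ℂ) + 1) * ((t : Polynomial ℂ) + 2)) * (G (t + 2) + G (t + 1)) := by
  have b1 := auxB G h0 h1 hrec (t + 1)
  have b0 := auxB G h0 h1 hrec t
  have e : G (t + 2) = X * G (t + 1) - G t := hrec t
  have hC := auxC G h0 h1 hrec t
  have hC' := congrArg derivative hC
  simp only [derivative_mul, derivative_sub, derivative_add, derivative_X,
    derivative_natCast, derivative_ofNat, derivative_one] at hC'
  refine mul_left_cancel₀ X2ne' ?_
  simp only [derivative_add] at hC hC' b0 b1 ⊢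
  push_cast at b1 b0 hC hC' ⊢
  linear_combination (4 - X ^ 2 : Polynomial ℂ) * hC' + ((t : Polynomial ℂ) + 2) * b0
    - ((t : Polynomial ℂ) + 1) * b1 + 2 * ((t : Polynomial ℂ) + 1) * ((t : Polynomial ℂ) + 2) * e
    - X * hC

lemma auxEv2 (G : ℕ → Polynomial ℂ) (h0 : G 0 = 0) (h1 : G 1 = 1)
    (hrec : ∀ k : ℕ, G (k + 2) = X * G (k + 1) - G k) (j : ℕ) :
    eval 2 (G j) = j := by
  induction j using Nat.twoStepInduction with
  | zero => simp [h0]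
  | one => simp [h1]
  | more j ih1 ih2 =>
      rw [hrec j]
      simp [ih1, ih2]
      push_cast
      ring
lemma auxEvm2 (G : ℕ → Polynomial ℂ) (h0 : G 0 = 0) (h1 : G 1 = 1)
    (hrec : ∀ k : ℕ, G (k + 2) = X * G (k + 1) - G k) (j : ℕ) :
    eval (-2) (G j) = (-1) ^ (j + 1) * j := by
  induction j using Nat.twoStepInduction with
  | zero => simp [h0]
  | one => simp [h1]
  | more j ih1 ih2 =>
      rw [hrec j]
      simp [ih1, ih2, pow_succ]
      push_cast
      ring


lemma auxTriple (G : ℕ → Polynomial ℂ) (h0 : G 0 = 0) (h1 : G 1 = 1)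
    (hrec : ∀ k : ℕ, G (k + 2) = X * G (k + 1) - G k) (t : ℕ) (r : ℂ)
    (e1 : eval r (derivative (G (t + 2) + G (t + 1))) = 0)
    (e2 : eval r (derivative (derivative (G (t + 2) + G (t + 1)))) = 0) :
    False := by
  set p : Polynomial ℂ := G (t + 2) + G (t + 1) with hp
  have hE := auxE G h0 h1 hrec t
  -- eval r p = 0
  have e0 : eval r p = 0 := by
    have := congrArg (eval r) hE
    simp only [eval_mul, eval_sub, eval_add, eval_pow, eval_X, eval_ofNat, eval_natCast,
      eval_one, e1, e2, mul_zero, zero_sub] at this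
    have htne : ((t : ℂ) + 1) * ((t : ℂ) + 2) ≠ 0 := by
      have h1' : ((t : ℂ) + 1) ≠ 0 := by
        have : ((t + 1 : ℕ) : ℂ) ≠ 0 := Nat.cast_ne_zero.mpr (by omega)
        push_cast at this; exact this
      have h2' : ((t : ℂ) + 2) ≠ 0 := by
        have : ((t + 2 : ℕ) : ℂ) ≠ 0 := Nat.cast_ne_zero.mpr (by omega)
        push_cast at this; exact this
      exact mul_ne_zero h1' h2'
    rw [hp, eval_add]
    have h'' : ((t:ℂ)+1)*((t:ℂ)+2)*(eval r (G (t+2)) + eval r (G (t+1))) = 0 := by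
      have e1' := e1
      have e2' := e2
      rw [hp] at e1' e2'
      linear_combination this - (4 - r ^ 2) * e2' + 2 * (r + 1) * e1'
    rcases mul_eq_zero.mp h'' with h | h
    · exact absurd h htne
    · exact h
  -- p ≠ 0
  have hev2 : eval 2 p = 2 * t + 3 := by
    rw [hp]; simp [auxEv2 G h0 h1 hrec]; push_cast; ring
  have pne : p ≠ 0 := by
    intro hz
    rw [hz] at hev2
    simp at hev2
    have : ((2 * t + 3 : ℕ) : ℂ) ≠ 0 := Nat.cast_ne_zero.mpr (by omega)
    push_cast at this
    exact this (by linear_combination -hev2)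
  -- r ≠ 2
  have hr2 : r ≠ 2 := by
    rintro rfl
    rw [hev2] at e0
    have : ((2 * t + 3 : ℕ) : ℂ) ≠ 0 := Nat.cast_ne_zero.mpr (by omega)
    push_cast at this
    exact this (by linear_combination e0)
  have hrm2 : r ≠ -2 := by
    rintro rfl
    have hevm : eval (-2) p = -(-1) ^ t := by
      rw [hp]
      simp [auxEvm2 G h0 h1 hrec, pow_succ]
      push_cast; ring
    rw [hevm] at e0
    exact pow_ne_zero t (by norm_num : (-1 : ℂ) ≠ 0) (by linear_combination -e0)
  -- (X - C r)^3 divides p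
  set w : Polynomial ℂ := X - C r with hw
  have hwd : derivative w = 1 := by rw [hw]; simp
  obtain ⟨q1, hq1⟩ : w ∣ p := dvd_iff_isRoot.mpr e0
  have hq1r : eval r q1 = 0 := by
    have hd := congrArg derivative hq1
    rw [derivative_mul, hwd, one_mul] at hd
    have := congrArg (eval r) hd
    rw [e1] at this
    simp [hw] at this
    tauto
  obtain ⟨q2, hq2⟩ : w ∣ q1 := dvd_iff_isRoot.mpr hq1r
  have hpq2 : p = w ^ 2 * q2 := by rw [hq1, hq2]; ring
  have hq2r : eval r q2 = 0 := by
    have hd := congrArg derivative hpq2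
    rw [derivative_mul, derivative_pow, hwd] at hd
    have hd2 := congrArg derivative hd
    simp only [derivative_mul, derivative_add, derivative_pow, hwd, derivative_ofNat,
      derivative_natCast, derivative_one, derivative_C] at hd2
    have := congrArg (eval r) hd2
    rw [e2] at this
    simp [hw] at this
    tauto
  obtain ⟨q3, hq3⟩ : w ∣ q2 := dvd_iff_isRoot.mpr hq2r
  have h3dvd : w ^ 3 ∣ p := ⟨q3, by rw [hpq2, hq3]; ring⟩
  -- root multiplicity
  set k : ℕ := rootMultiplicity r p with hk
  have hk3 : 3 ≤ k := (le_rootMultiplicity_iff pne).mpr h3dvd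
  obtain ⟨j, hj⟩ : ∃ j, k = j + 3 := ⟨k - 3, by omega⟩
  set q : Polynomial ℂ := p /ₘ w ^ k with hqdef
  have hqfac : w ^ k * q = p := pow_mul_divByMonic_rootMultiplicity_eq p r
  have hqr : eval r q ≠ 0 := eval_divByMonic_pow_rootMultiplicity_ne_zero r pne
  have hpfac : p = w ^ (j + 3) * q := by rw [← hqfac, hj]
  have wne : w ≠ 0 := X_sub_C_ne_zero r
  have d1 : derivative p = w ^ (j + 2) * (((j : Polynomial ℂ) + 3) * q + w * derivative q) := by
    rw [hpfac, derivative_mul, derivative_pow, hwd, show j + 3 - 1 = j + 2 from by omega]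
    simp only [map_natCast]
    push_cast
    ring
  have d2 : derivative (derivative p)
      = w ^ (j + 1) * ((((j : Polynomial ℂ) + 3) * ((j : Polynomial ℂ) + 2)) * q
          + (2 * ((j : Polynomial ℂ) + 3)) * w * derivative q
          + w ^ 2 * derivative (derivative q)) := by
    rw [d1, derivative_mul, derivative_pow, hwd, show j + 2 - 1 = j + 1 from by omega,
      derivative_add, derivative_mul, derivative_mul, hwd]
    simp only [derivative_natCast, derivative_add, derivative_ofNat, map_natCast]
    push_cast
    ring
  rw [← hp] at hE
  rw [d2, d1, hpfac] at hE
  have hcan : (4 - X ^ 2) * ((((j : Polynomial ℂ) + 3) * ((j : Polynomial ℂ) + 2)) * q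
          + (2 * ((j : Polynomial ℂ) + 3)) * w * derivative q
          + w ^ 2 * derivative (derivative q))
      = 2 * (X + 1) * (w * (((j : Polynomial ℂ) + 3) * q + w * derivative q))
        - (((t : Polynomial ℂ) + 1) * ((t : Polynomial ℂ) + 2)) * (w ^ 2 * q) := by
    refine mul_left_cancel₀ (pow_ne_zero (j + 1) wne) ?_
    linear_combination hE
  have h4r : (4 : ℂ) - r ^ 2 ≠ 0 := fun hz => by
    have h' : (2 - r) * (2 + r) = 0 := by linear_combination hz
    rcases mul_eq_zero.mp h' with h'' | h''
    · exact hr2 (by linear_combination -h'')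
    · exact hrm2 (by linear_combination h'')
  have hj3 : ((j : ℂ) + 3) ≠ 0 := by
    have : ((j + 3 : ℕ) : ℂ) ≠ 0 := Nat.cast_ne_zero.mpr (by omega)
    push_cast at this; exact this
  have hj2 : ((j : ℂ) + 2) ≠ 0 := by
    have : ((j + 2 : ℕ) : ℂ) ≠ 0 := Nat.cast_ne_zero.mpr (by omega)
    push_cast at this; exact this
  have hfin := congrArg (eval r) hcan
  simp only [eval_mul, eval_add, eval_sub, eval_pow, eval_X, eval_ofNat, eval_natCast,
    eval_one, eval_C, hw, sub_self, zero_pow, mul_zero, zero_mul, add_zero, zero_add,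
    sub_zero] at hfin
  apply hqr
  have hprod : ((4:ℂ) - r ^ 2) * ((((j:ℂ) + 3) * ((j:ℂ) + 2)) * eval r q) = 0 := by
    linear_combination hfin
  rcases mul_eq_zero.mp hprod with hx | hx
  · exact absurd hx h4r
  rcases mul_eq_zero.mp hx with hy | hy
  · exact absurd hy (mul_ne_zero hj3 hj2)
  · exact hy


/-- For `m, n ≥ 1` and `λ` with `λ ≠ 1`, `λ^n ≠ 1`, `λ^{n+1} ≠ 1`, the polynomial
`h_λ(r) = γ_{m+1}(r) + γ_m(r) + ϑ_{2n+1}/(ϑ_{n+1} ϑ_n)` (with `ϑ_k = λ^k − 1` and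
`γ_k` the Chebyshev-type polynomials) has no triple root. -/
theorem stmt_15 (m n : ℕ) (hm : 1 ≤ m) (hn : 1 ≤ n) (l : ℂ)
    (hl1 : l ≠ 1) (hln : l ^ n ≠ 1) (hln1 : l ^ (n + 1) ≠ 1)
    (γ : ℤ → Polynomial ℂ) (h0 : γ 0 = 0) (h1 : γ 1 = 1)
    (hrec : ∀ k : ℤ, γ (k + 1) = Polynomial.X * γ k - γ (k - 1))
    (h : Polynomial ℂ)
    (hh : h = γ (m + 1) + γ m +
      Polynomial.C ((l ^ (2 * n + 1) - 1) / ((l ^ (n + 1) - 1) * (l ^ n - 1)))) :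
    ¬ ∃ r : ℂ, h.eval r = 0 ∧ h.derivative.eval r = 0 ∧
      h.derivative.derivative.eval r = 0 := by
  rintro ⟨r, -, hr1, hr2⟩
  obtain ⟨t, rfl⟩ : ∃ t, m = t + 1 := ⟨m - 1, by omega⟩
  have hG1 : (fun k : ℕ => γ (k : ℤ)) 1 = 1 := by simpa using h1
  have hG0 : (fun k : ℕ => γ (k : ℤ)) 0 = 0 := by simpa using h0
  have hGrec : ∀ k : ℕ, (fun k : ℕ => γ (k : ℤ)) (k + 2)
      = X * (fun k : ℕ => γ (k : ℤ)) (k + 1) - (fun k : ℕ => γ (k : ℤ)) k := by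
    intro k
    show γ ((k + 2 : ℕ) : ℤ) = X * γ ((k + 1 : ℕ) : ℤ) - γ ((k : ℕ) : ℤ)
    have hk := hrec ((k : ℤ) + 1)
    have e1 : ((k : ℤ) + 1 + 1) = ((k + 2 : ℕ) : ℤ) := by push_cast; ring
    have e2 : ((k : ℤ) + 1 - 1) = ((k : ℕ) : ℤ) := by push_cast; ring
    have e3 : ((k : ℤ) + 1) = ((k + 1 : ℕ) : ℤ) := by push_cast; ring
    rw [e1, e2, e3] at hk
    exact hk
  have ec : (((t + 1 : ℕ)) : ℤ) + 1 = ((t + 2 : ℕ) : ℤ) := by push_cast; ring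
  rw [ec] at hh
  refine auxTriple (fun k : ℕ => γ (k : ℤ)) hG0 hG1 hGrec t r ?_ ?_
  · show eval r (derivative (γ ((t + 2 : ℕ) : ℤ) + γ ((t + 1 : ℕ) : ℤ))) = 0
    rw [hh] at hr1
    simp only [derivative_add, derivative_C, add_zero] at hr1 ⊢
    exact hr1
  · show eval r (derivative (derivative (γ ((t + 2 : ℕ) : ℤ) + γ ((t + 1 : ℕ) : ℤ)))) = 0
    rw [hh] at hr2
    simp only [derivative_add, derivative_C, add_zero] at hr2 ⊢
    exact hr2
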